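/- Let q ∈ P^loglog(ℝⁿ). Then there is a constant C' > 0, depending only on n, the bound q⁺ of q, and the loglog-Hölder constant of q, such that for every cube Q ⊂ ℝⁿ and every x, y ∈ Q: (log(e + 1/|Q|))^{q(x)} ≤ C' (log(e + 1/|Q|))^{q(y)}. -/

import Mathlib

open MeasureTheory ENNReal NNReal Set

noncomputable section

abbrev Rn (n : ℕ) := EuclideanSpace ℝ (Fin n)

namespace VarExp

variable {n : ℕ}

/-- Closed axis-parallel cube with center `c` and sidelength `l`. -/
def cubeSet (c : Rn n) (l : ℝ) : Set (Rn n) := {x | ∀ i, |x i - c i| ≤ l / 2}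

/-- Characteristic function of a set. -/
def chi (s : Set (Rn n)) : Rn n → ℝ := s.indicator fun _ => 1

/-- Average of `b` over the cube with center `c` and sidelength `l`. -/
def cavg (c : Rn n) (l : ℝ) (b : Rn n → ℝ) : ℝ := ⨍ x in cubeSet c l, b x

/-- Global log-Hölder continuity with explicit constants. -/
def LogHolderWith (p : Rn n → ℝ) (C pinf : ℝ) : Prop :=
  (∀ x y : Rn n, |p x - p y| ≤ C / Real.log (Real.exp 1 + 1 / ‖x - y‖)) ∧
  (∀ x : Rn n, |p x - pinf| ≤ C / Real.log (Real.exp 1 + ‖x‖))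

/-- Global log-Hölder continuity (the class `P^log`). -/
def LogHolder (p : Rn n → ℝ) : Prop := ∃ C pinf : ℝ, 0 < C ∧ LogHolderWith p C pinf

/-- The class `P^loglog`: bounded and loglog-Hölder continuous. -/
def LogLogHolder (q : Rn n → ℝ) : Prop :=
  (∃ M : ℝ, ∀ x, |q x| ≤ M) ∧
  ∃ C : ℝ, 0 < C ∧ ∀ x y : Rn n,
    |q x - q y| ≤ C / Real.log (Real.exp 1 + Real.log (Real.exp 1 + 1 / ‖x - y‖))

/-- Pointwise conjugate exponent. -/
def conj (t : ℝ) : ℝ := t / (t - 1)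

/-- Luxemburg norm (with values in `ℝ≥0∞`) of an `ℝ≥0∞`-valued function for a
variable exponent `p`. -/
def vnormE (p : Rn n → ℝ) (f : Rn n → ℝ≥0∞) : ℝ≥0∞ :=
  sInf {lam : ℝ≥0∞ | ∃ l : ℝ, 0 < l ∧ lam = ENNReal.ofReal l ∧
    ∫⁻ x, (f x / ENNReal.ofReal l) ^ p x ≤ 1}

/-- Variable exponent Lebesgue (Luxemburg) norm. -/
def vnorm (p : Rn n → ℝ) (f : Rn n → ℝ) : ℝ≥0∞ :=
  vnormE p fun x => ENNReal.ofReal |f x|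

/-- `φ_p(x,t)` for an extended exponent : `t^p` if `p < ∞`, and `∞·χ_{(1,∞)}(t)` if `p = ∞`. -/
def phiExp (pe : ℝ≥0∞) (t : ℝ≥0∞) : ℝ≥0∞ :=
  if pe = ⊤ then (if t ≤ 1 then 0 else ⊤) else t ^ pe.toReal

/-- Luxemburg norm for an extended (possibly infinite) variable exponent. -/
def vnormX (p : Rn n → ℝ≥0∞) (f : Rn n → ℝ) : ℝ≥0∞ :=
  sInf {lam : ℝ≥0∞ | ∃ l : ℝ, 0 < l ∧ lam = ENNReal.ofReal l ∧
    ∫⁻ x, phiExp (p x) (ENNReal.ofReal (|f x| / l)) ≤ 1}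

/-- The Musielak–Orlicz norm of the space `L^{p(·)}(log L)^{q(·)}`. -/
def llognorm (p q : Rn n → ℝ) (f : Rn n → ℝ) : ℝ≥0∞ :=
  sInf {lam : ℝ≥0∞ | ∃ l : ℝ, 0 < l ∧ lam = ENNReal.ofReal l ∧
    ∫⁻ x, ENNReal.ofReal ((|f x| / l) ^ p x *
      Real.log (Real.exp 1 + |f x| / l) ^ q x) ≤ 1}

/-- Generalized Φ-function. -/
def IsGPhi (Ψ : Rn n → ℝ → ℝ≥0∞) : Prop :=
  (∀ t : ℝ, Measurable fun x => Ψ x t) ∧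
  (∀ x, ConvexOn ℝ≥0 (Ici (0:ℝ)) (Ψ x)) ∧
  (∀ x, Ψ x 0 = 0) ∧
  (∀ x, Filter.Tendsto (Ψ x) (nhdsWithin 0 (Ioi 0)) (nhds 0)) ∧
  (∀ x, Filter.Tendsto (Ψ x) Filter.atTop (nhds ⊤))

/-- Luxemburg norm associated to a generalized Φ-function. -/
def gnorm (Ψ : Rn n → ℝ → ℝ≥0∞) (f : Rn n → ℝ) : ℝ≥0∞ :=
  sInf {lam : ℝ≥0∞ | ∃ l : ℝ, 0 < l ∧ lam = ENNReal.ofReal l ∧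
    ∫⁻ x, Ψ x (|f x| / l) ≤ 1}

/-- Generalized inverse of a generalized Φ-function. -/
def ginv (Ψ : Rn n → ℝ → ℝ≥0∞) (x : Rn n) (t : ℝ≥0∞) : ℝ :=
  sInf {u : ℝ | 0 ≤ u ∧ t ≤ Ψ x u}

/-- Conjugate (Legendre transform) of a generalized Φ-function. -/
def gconj (Ψ : Rn n → ℝ → ℝ≥0∞) (x : Rn n) (u : ℝ) : ℝ≥0∞ :=
  ⨆ t : Ici (0:ℝ), ENNReal.ofReal (t.1 * u) - Ψ x t.1

/-- Condition 𝓕 on a triple of generalized Φ-functions. -/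
def CondF (A B D : Rn n → ℝ → ℝ≥0∞) : Prop :=
  ∃ C : ℝ, 0 < C ∧
    (∀ (c : Rn n) (l : ℝ), 0 < l →
      gnorm A (chi (cubeSet c l)) * gnorm B (chi (cubeSet c l)) ≤
        ENNReal.ofReal C * gnorm D (chi (cubeSet c l))) ∧
    (∀ (x : Rn n) (t : ℝ≥0∞), ginv A x t * ginv B x t ≤ C * ginv D x t) ∧
    (∀ (c : Rn n) (l : ℝ), 0 < l →
      gnorm D (chi (cubeSet c l)) * gnorm (gconj D) (chi (cubeSet c l)) ≤
        ENNReal.ofReal (C * l ^ n))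

/-- Maximal operator associated to a generalized Φ-function. -/
def gmax (Ψ : Rn n → ℝ → ℝ≥0∞) (f : Rn n → ℝ) (x : Rn n) : ℝ≥0∞ :=
  ⨆ (c : Rn n) (l : ℝ) (_ : 0 < l) (_ : x ∈ cubeSet c l),
    gnorm Ψ ((cubeSet c l).indicator f) / gnorm Ψ (chi (cubeSet c l))

/-- Fractional maximal operator associated to a generalized Φ-function, where the
fractional exponent `β` is allowed to take the value `∞`. -/
def gmaxFrac (β : Rn n → ℝ≥0∞) (Ψ : Rn n → ℝ → ℝ≥0∞) (f : Rn n → ℝ) (x : Rn n) : ℝ≥0∞ :=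
  ⨆ (c : Rn n) (l : ℝ) (_ : 0 < l) (_ : x ∈ cubeSet c l),
    vnormX β (chi (cubeSet c l)) *
      gnorm Ψ ((cubeSet c l).indicator f) / gnorm Ψ (chi (cubeSet c l))

/-- `φ_{a,b}(t) = t^a (log(e+t))^b`. -/
def phiab (a b t : ℝ) : ℝ := t ^ a * Real.log (Real.exp 1 + t) ^ b

/-- Generalized inverse of `φ_{a,b}`. -/
def phiInv (a b s : ℝ) : ℝ := sInf {u : ℝ | 0 ≤ u ∧ s ≤ phiab a b u}

/-- The annulus `{x : r < ‖x‖ ≤ R}`. -/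
def annulus (r R : ℝ) : Set (Rn n) := {x | r < ‖x‖ ∧ ‖x‖ ≤ R}

/-- `K̄(t) = ess sup_{t<|x|≤2t} K(x)`. -/
def Kbar (K : Rn n → ℝ) (t : ℝ) : ℝ≥0∞ :=
  essSup (fun x => ENNReal.ofReal (K x)) (volume.restrict (annulus t (2 * t)))

/-- `K̃(t) = ∫_{|z|≤t} K(z) dz`. -/
def Ktilde (K : Rn n → ℝ) (t : ℝ) : ℝ :=
  ∫ z in {z : Rn n | ‖z‖ ≤ t}, K z

/-- The class 𝔇 of kernels, with explicit parameters `c`, `δ`, `ε`. -/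
def ClassDWith (K : Rn n → ℝ) (c δ ε : ℝ) : Prop :=
  LocallyIntegrable K ∧ (∀ x, 0 ≤ K x) ∧
  0 < c ∧ 0 < δ ∧ 0 ≤ ε ∧ ε < 1 ∧
  ∀ k : ℤ,
    essSup (fun x => ENNReal.ofReal (K x))
        (volume.restrict (annulus ((2:ℝ) ^ k) ((2:ℝ) ^ (k+1)))) ≤
      ENNReal.ofReal ((c / (2:ℝ) ^ (k * (n:ℤ))) *
        ∫ y in annulus (δ * (1-ε) * (2:ℝ) ^ k) (2 * δ * (1+ε) * (2:ℝ) ^ k), K y)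

/-- The class 𝔇 of kernels. -/
def ClassD (K : Rn n → ℝ) : Prop := ∃ c δ ε : ℝ, ClassDWith K c δ ε

/-- The half-open dyadic cube `2^{-k}([0,1)^n + m)`. -/
def dyadicSet (k : ℤ) (m : Fin n → ℤ) : Set (Rn n) :=
  {x | ∀ i, (m i : ℝ) * (2:ℝ) ^ (-k) ≤ x i ∧ x i < ((m i : ℝ) + 1) * (2:ℝ) ^ (-k)}

/-- The center of the dyadic cube `2^{-k}([0,1)^n + m)`. -/
def dyadicCenter (k : ℤ) (m : Fin n → ℤ) : Rn n :=
  (WithLp.equiv 2 (Fin n → ℝ)).symm fun i => ((m i : ℝ) + 1 / 2) * (2:ℝ) ^ (-k)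

end VarExp

open VarExp in
/-- for `q ∈ P^loglog`, `(log(e+1/|Q|))^{q(x)} ≃ (log(e+1/|Q|))^{q(y)}`
for `x, y` in a cube `Q`. -/
theorem statement4 (n : ℕ) (q : Rn n → ℝ) (hq : LogLogHolder q) :
    ∃ C' : ℝ, 0 < C' ∧ ∀ (c : Rn n) (l : ℝ), 0 < l →
      ∀ x ∈ cubeSet c l, ∀ y ∈ cubeSet c l,
        Real.log (Real.exp 1 + 1 / l ^ n) ^ q x ≤
          C' * Real.log (Real.exp 1 + 1 / l ^ n) ^ q y := by
  obtain ⟨⟨M, hM⟩, Ch, hCh, hHol⟩ := hq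
  have he1 : (1:ℝ) ≤ Real.exp 1 := by
    have := Real.add_one_le_exp (1:ℝ); linarith
  set a : ℝ := Real.log (Real.log (Real.exp 1 + (n:ℝ)^n) + n) with ha
  have hc1 : (1:ℝ) ≤ Real.log (Real.exp 1 + (n:ℝ)^n) := by
    have : Real.log (Real.exp 1) ≤ Real.log (Real.exp 1 + (n:ℝ)^n) := by
      apply Real.log_le_log (Real.exp_pos 1)
      have : (0:ℝ) ≤ (n:ℝ)^n := by positivity
      linarith
    rwa [Real.log_exp] at this
  have ha0 : 0 ≤ a := Real.log_nonneg (by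
    have : (0:ℝ) ≤ (n:ℝ) := Nat.cast_nonneg n
    linarith)
  set K := Ch * (a + 1) with hK
  have hK0 : 0 ≤ K := mul_nonneg hCh.le (by linarith)
  refine ⟨Real.exp K, Real.exp_pos K, ?_⟩
  intro c l hl x hx y hy
  set L := Real.log (Real.exp 1 + 1 / l ^ n) with hLdef
  have hL1 : 1 ≤ L := by
    have : Real.log (Real.exp 1) ≤ L := by
      apply Real.log_le_log (Real.exp_pos 1)
      have : (0:ℝ) ≤ 1 / l ^ n := by positivity
      linarith
    rwa [Real.log_exp] at this
  have hLpos : 0 < L := lt_of_lt_of_le one_pos hL1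
  by_cases hxy : x = y
  · subst hxy
    exact le_mul_of_one_le_left (Real.rpow_nonneg hLpos.le _) (Real.one_le_exp hK0)
  · have hD : 0 < ‖x - y‖ := norm_sub_pos_iff.mpr hxy
    have hn1 : 1 ≤ n := by
      rcases Nat.eq_zero_or_pos n with h0 | h1
      · exact absurd (by subst h0; exact PiLp.ext fun i => Fin.elim0 i) hxy
      · exact h1
    have hn1' : (1:ℝ) ≤ (n:ℝ) := by exact_mod_cast hn1
    set D := ‖x - y‖ with hDdef
    have hil : ∀ i, |x i - y i| ≤ l := by
      intro i
      have h1 := hx i; have h2 := hy i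
      calc |x i - y i| = |(x i - c i) - (y i - c i)| := by ring_nf
        _ ≤ |x i - c i| + |y i - c i| := abs_sub _ _
        _ ≤ l := by linarith
    have hDle : D ≤ n * l := by
      have hnorm : D = Real.sqrt (∑ i, ‖(x - y) i‖ ^ 2) := EuclideanSpace.norm_eq (x - y)
      have hsum : (∑ i, ‖(x - y) i‖ ^ 2) ≤ ((n:ℝ) * l) ^ 2 := by
        calc (∑ i, ‖(x - y) i‖ ^ 2) ≤ ∑ _i : Fin n, l ^ 2 := by
              apply Finset.sum_le_sum
              intro i _
              have : ‖(x - y) i‖ = |x i - y i| := by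
                simp [PiLp.sub_apply, Real.norm_eq_abs]
              rw [this]
              have := hil i
              nlinarith [abs_nonneg (x i - y i)]
          _ = (n:ℝ) * l ^ 2 := by rw [Finset.sum_const, Finset.card_univ, Fintype.card_fin, nsmul_eq_mul]
          _ ≤ ((n:ℝ) * l) ^ 2 := by nlinarith
      calc D = Real.sqrt (∑ i, ‖(x - y) i‖ ^ 2) := hnorm
        _ ≤ Real.sqrt (((n:ℝ) * l) ^ 2) := Real.sqrt_le_sqrt hsum
        _ = (n:ℝ) * l := Real.sqrt_sq (by positivity)
    set S := Real.log (Real.exp 1 + 1 / D) with hSdef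
    have hS1 : 1 ≤ S := by
      have : Real.log (Real.exp 1) ≤ S := by
        apply Real.log_le_log (Real.exp_pos 1)
        have : (0:ℝ) ≤ 1 / D := by positivity
        linarith
      rwa [Real.log_exp] at this
    -- L ≤ (log(e+n^n) + n) * S
    have hinv : 1 / l ^ n ≤ (n:ℝ)^n * (1 / D)^n := by
      have h1 : 1 / l ≤ (n:ℝ) / D := by
        rw [div_le_div_iff₀ hl hD]
        linarith
      have h2 : (1 / l) ^ n ≤ ((n:ℝ) / D) ^ n :=
        pow_le_pow_left₀ (by positivity) h1 n
      calc 1 / l ^ n = (1 / l) ^ n := by rw [one_div, one_div, inv_pow]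
        _ ≤ ((n:ℝ) / D) ^ n := h2
        _ = (n:ℝ)^n * (1 / D)^n := by rw [div_pow, one_div, inv_pow, div_eq_mul_inv]
    have hLle : L ≤ (Real.log (Real.exp 1 + (n:ℝ)^n) + n) * S := by
      have step1 : L ≤ Real.log (Real.exp 1 + (n:ℝ)^n * (1 / D)^n) := by
        apply Real.log_le_log (by positivity)
        linarith
      have step2 : Real.exp 1 + (n:ℝ)^n * (1 / D)^n ≤
          (Real.exp 1 + (n:ℝ)^n) * (Real.exp 1 + (1 / D)^n) := by
        have h1 : (0:ℝ) ≤ (n:ℝ)^n := by positivity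
        have h2 : (0:ℝ) ≤ (1 / D)^n := by positivity
        nlinarith
      have step3 : Real.log ((Real.exp 1 + (n:ℝ)^n) * (Real.exp 1 + (1 / D)^n)) =
          Real.log (Real.exp 1 + (n:ℝ)^n) + Real.log (Real.exp 1 + (1 / D)^n) :=
        Real.log_mul (by positivity) (by positivity)
      have step4 : Real.log (Real.exp 1 + (1 / D)^n) ≤ (n:ℝ) * S := by
        have hpp : Real.exp 1 + (1 / D)^n ≤ (Real.exp 1 + 1 / D)^n := by
          have h1 : Real.exp 1 ≤ (Real.exp 1)^n := by
            calc Real.exp 1 = (Real.exp 1)^1 := (pow_one _).symm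
              _ ≤ (Real.exp 1)^n := pow_le_pow_right₀ he1 hn1
          have h2 := pow_add_pow_le (le_of_lt (Real.exp_pos 1))
            (by positivity : (0:ℝ) ≤ 1 / D) (by omega : n ≠ 0)
          linarith
        calc Real.log (Real.exp 1 + (1 / D)^n) ≤ Real.log ((Real.exp 1 + 1 / D)^n) :=
              Real.log_le_log (by positivity) hpp
          _ = (n:ℝ) * S := by rw [Real.log_pow]
      have := Real.log_le_log (by positivity :
          (0:ℝ) < Real.exp 1 + (n:ℝ)^n * (1 / D)^n) step2
      have key : L ≤ Real.log (Real.exp 1 + (n:ℝ)^n) + (n:ℝ) * S := by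
        rw [step3] at this
        linarith
      nlinarith [mul_nonneg (by linarith : (0:ℝ) ≤ Real.log (Real.exp 1 + (n:ℝ)^n))
        (by linarith : (0:ℝ) ≤ S - 1)]
    -- log L ≤ a + log(e + S)
    have hlogL : Real.log L ≤ a + Real.log (Real.exp 1 + S) := by
      have h1 : Real.log L ≤ Real.log ((Real.log (Real.exp 1 + (n:ℝ)^n) + n) * S) :=
        Real.log_le_log hLpos hLle
      have h2 : Real.log ((Real.log (Real.exp 1 + (n:ℝ)^n) + n) * S) =
          a + Real.log S := Real.log_mul (by linarith) (by linarith)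
      have h3 : Real.log S ≤ Real.log (Real.exp 1 + S) :=
        Real.log_le_log (by linarith) (by linarith)
      linarith
    have hT1 : 1 ≤ Real.log (Real.exp 1 + S) := by
      have : Real.log (Real.exp 1) ≤ Real.log (Real.exp 1 + S) :=
        Real.log_le_log (Real.exp_pos 1) (by linarith)
      rwa [Real.log_exp] at this
    set T := Real.log (Real.exp 1 + S) with hTdef
    have hHxy : |q x - q y| ≤ Ch / T := by
      have := hHol x y
      rwa [← hDdef, ← hSdef, ← hTdef] at this
    have hTpos : 0 < T := lt_of_lt_of_le one_pos hT1
    have hqle : q x - q y ≤ Ch / T := (abs_le.mp hHxy).2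
    have hlogL0 : 0 ≤ Real.log L := Real.log_nonneg hL1
    have hmain : (q x - q y) * Real.log L ≤ K := by
      have hu : (Ch / T) * T = Ch := div_mul_cancel₀ Ch (ne_of_gt hTpos)
      have hu0 : 0 ≤ Ch / T := le_of_lt (div_pos hCh hTpos)
      have h1 : (q x - q y) * Real.log L ≤ (Ch / T) * Real.log L :=
        mul_le_mul_of_nonneg_right hqle hlogL0
      have h2 : (Ch / T) * Real.log L ≤ (Ch / T) * (a + T) :=
        mul_le_mul_of_nonneg_left (by linarith) hu0
      have h3 : (Ch / T) * (a + T) ≤ Ch * a + Ch := by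
        have hct : Ch / T ≤ Ch := by
          rw [div_le_iff₀ hTpos]
          exact le_mul_of_one_le_right hCh.le hT1
        have heq : (Ch / T) * (a + T) = (Ch / T) * a + Ch := by
          rw [mul_add, hu]
        have hle : (Ch / T) * a ≤ Ch * a := mul_le_mul_of_nonneg_right hct ha0
        linarith
      have : K = Ch * a + Ch := by rw [hK]; ring
      linarith
    -- conclude
    have hrw : L ^ q x = L ^ (q x - q y) * L ^ q y := by
      rw [← Real.rpow_add hLpos]; ring_nf
    have hexp : L ^ (q x - q y) ≤ Real.exp K := by
      rw [Real.rpow_def_of_pos hLpos]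
      exact Real.exp_le_exp.mpr (by rw [mul_comm]; exact hmain)
    calc L ^ q x = L ^ (q x - q y) * L ^ q y := hrw
      _ ≤ Real.exp K * L ^ q y :=
        mul_le_mul_of_nonneg_right hexp (Real.rpow_nonneg hLpos.le _)
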